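/- Let κ be a regular cardinal, X ⊆ Y ⊆ Z infinite sets, and l = (Fm_Σ(X), ⊢) a logic of cardinality κ. For an infinite set W ⊇ X, define the relation ⊢^{+,W} on Fm_Σ(W) by Γ ⊢^{+,W} φ iff σ[Γ] ⊢ σ(φ) for every Σ-homomorphism σ : Fm_Σ(W) → Fm_Σ(X), and let ⊢^{+,W}_κ be its κ-ary part. Then for all Γ ∪ {φ} ⊆ Fm_Σ(Y) (regarded inside Fm_Σ(Z)): Γ ⊢^{+,Y}_κ φ if and only if Γ ⊢^{+,Z}_κ φ. That is, the restriction to Fm_Σ(Y) of the maximal natural extension of l to Fm_Σ(Z) is the maximal natural extension of l to Fm_Σ(Y). -/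

import Mathlib

universe u v w

open FirstOrder FirstOrder.Language

lemma subst_relabel' {L : FirstOrder.Language} {A B C : Type*} (f : A → B)
    (σ : B → L.Term C) (t : L.Term A) :
    (t.relabel f).subst σ = t.subst (fun a => σ (f a)) := by
  induction t with
  | var => rfl
  | func g ts ih => simp [Term.relabel, Term.subst, ih]

lemma relabel_inj' {L : FirstOrder.Language} {A B : Type*} [Nonempty A] {f : A → B}
    (hf : Function.Injective f) :
    Function.Injective (Term.relabel (L := L) f) := by
  have h : Function.LeftInverse (Term.relabel (L := L) (Function.invFun f))
      (Term.relabel f) := by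
    intro t
    rw [Term.relabel_relabel]
    have : Function.invFun f ∘ f = id := funext fun a => Function.leftInverse_invFun hf a
    rw [this, Term.relabel_id]
  exact h.injective

/-- A relation between subsets and elements of `A` is `μ`-ary. -/
def KAry {A : Type*} (μ : Cardinal) (r : Set A → A → Prop) : Prop :=
  ∀ (Γ : Set A) (φ : A), r Γ φ → ∃ Γ' ⊆ Γ, Cardinal.mk ↥Γ' < μ ∧ r Γ' φ

/-- The κ-ary part of a relation. -/
def kAryPart {A : Type*} (κ : Cardinal) (r : Set A → A → Prop) :
    Set A → A → Prop :=
  fun Γ φ => ∃ Γ' ⊆ Γ, Cardinal.mk ↥Γ' < κ ∧ r Γ' φ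

/-- `r` is a logic on `Fm_Σ(W)`: reflexive, monotone, satisfying cut, structural. -/
def IsLogicOn {L : FirstOrder.Language} {W : Type*}
    (r : Set (L.Term W) → L.Term W → Prop) : Prop :=
  (∀ (Γ : Set (L.Term W)) (φ : L.Term W), φ ∈ Γ → r Γ φ) ∧
  (∀ (Γ Δ : Set (L.Term W)) (φ : L.Term W), Γ ⊆ Δ → r Γ φ → r Δ φ) ∧
  (∀ (Γ Δ : Set (L.Term W)) (φ : L.Term W), r Γ φ → (∀ ψ ∈ Γ, r Δ ψ) → r Δ φ) ∧
  (∀ (σ : W → L.Term W) (Γ : Set (L.Term W)) (φ : L.Term W),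
      r Γ φ → r ((fun t : L.Term W => t.subst σ) '' Γ) (φ.subst σ))

/-- The relation `⊢^{+,W}` on `Fm_Σ(W)`: `Γ ⊢^{+,W} φ` iff `σ[Γ] ⊢ σ(φ)` for every
Σ-homomorphism `σ : Fm_Σ(W) → Fm_Σ(X)`. -/
def PlusRel {L : FirstOrder.Language} {X W : Type*}
    (r : Set (L.Term X) → L.Term X → Prop)
    (Γ : Set (L.Term W)) (φ : L.Term W) : Prop :=
  ∀ σ : W → L.Term X, r ((fun t : L.Term W => t.subst σ) '' Γ) (φ.subst σ)

/-- for `X ⊆ Y ⊆ Z` and a logic `l` on `Fm_Σ(X)` of regular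
cardinality κ, the restriction to `Fm_Σ(Y)` of the maximal natural extension
`⊢^{+,Z}_κ` of `l` to `Fm_Σ(Z)` is the maximal natural extension `⊢^{+,Y}_κ`:
for all `Γ ∪ {φ} ⊆ Fm_Σ(Y)`, `Γ ⊢^{+,Y}_κ φ` iff `Γ ⊢^{+,Z}_κ φ`. -/
theorem stmt_18 {L : FirstOrder.Language.{u, v}} {X Y Z : Type w}
    [Infinite X] [Infinite Y] [Infinite Z]
    (em₁ : X → Y) (hem₁ : Function.Injective em₁)
    (em₂ : Y → Z) (hem₂ : Function.Injective em₂)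
    (κ : Cardinal.{max u w}) (hκ : κ.IsRegular)
    (r : Set (L.Term X) → L.Term X → Prop) (hlogic : IsLogicOn r)
    (hκary : KAry κ r)
    (hleast : ∀ μ : Cardinal.{max u w}, Cardinal.aleph0 ≤ μ → KAry μ r → κ ≤ μ) :
    ∀ (Γ : Set (L.Term Y)) (φ : L.Term Y),
      kAryPart κ (PlusRel (X := X) r) Γ φ ↔
      kAryPart κ (PlusRel (X := X) r)
        (Term.relabel em₂ '' Γ) (Term.relabel em₂ φ) := by
  intro Γ φ
  constructor
  · rintro ⟨Γ', hsub, hcard, hplus⟩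
    refine ⟨Term.relabel em₂ '' Γ', Set.image_mono hsub,
      lt_of_le_of_lt Cardinal.mk_image_le hcard, ?_⟩
    intro σ
    have : (fun t : L.Term Z => t.subst σ) '' (Term.relabel em₂ '' Γ') =
        (fun t : L.Term Y => t.subst (fun y => σ (em₂ y))) '' Γ' := by
      rw [Set.image_image]
      exact Set.image_congr fun t _ => subst_relabel' em₂ σ t
    rw [this, subst_relabel']
    exact hplus (fun y => σ (em₂ y))
  · rintro ⟨Δ, hsub, hcard, hplus⟩
    set Γ' : Set (L.Term Y) := Γ ∩ Term.relabel em₂ ⁻¹' Δ with hΓ'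
    have himg : Term.relabel em₂ '' Γ' = Δ := by
      apply Set.Subset.antisymm
      · rintro _ ⟨t, ⟨_, ht⟩, rfl⟩; exact ht
      · intro t ht
        obtain ⟨s, hs, rfl⟩ := hsub ht
        exact ⟨s, ⟨hs, ht⟩, rfl⟩
    have hcard' : Cardinal.mk ↥Γ' < κ := by
      have := Cardinal.mk_image_eq (f := Term.relabel (L := L) em₂) (s := Γ')
        (relabel_inj' hem₂)
      rw [himg] at this
      rwa [← this]
    refine ⟨Γ', Set.inter_subset_left, hcard', ?_⟩
    intro σ
    have hXne : Nonempty X := inferInstance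
    classical
    let τ : Z → L.Term X := fun z =>
      if h : ∃ y, em₂ y = z then σ h.choose else Term.var (Classical.arbitrary X)
    have hτ : ∀ y : Y, τ (em₂ y) = σ y := by
      intro y
      have h : ∃ y', em₂ y' = em₂ y := ⟨y, rfl⟩
      have : h.choose = y := hem₂ h.choose_spec
      simp only [τ, dif_pos h, this]
    have key := hplus τ
    rw [← himg, Set.image_image] at key
    have e1 : (fun t : L.Term Y => (Term.relabel em₂ t).subst τ) =
        fun t : L.Term Y => t.subst σ := by
      funext t
      rw [subst_relabel']
      exact congrArg _ (funext fun y => hτ y)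
    have e2 : (Term.relabel em₂ φ).subst τ = φ.subst σ := by
      rw [subst_relabel']
      exact congrArg _ (funext fun y => hτ y)
    rwa [e1, e2] at key
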